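/- arXiv:2405.02450 — 4 statements merged into one kernel-verified Lean document; each statement's English description precedes it below -/
import Mathlib

section
/- Let n ≥ 1 and let a_1, …, a_n : ℝ^n → ℝ be smooth functions, 2π-periodic in each variable, satisfying ∂_{t_j} a_k = ∂_{t_k} a_j on ℝ^n for all j, k ∈ {1,…,n}, and suppose that for each j the function a_{j0}(t) = (1/2π) ∫₀^{2π} a_j(t_1, …, t_{j−1}, λ, t_{j+1}, …, t_n) dλ is constant, equal to α_j ∈ ℝ. Then the function A(t) = Σ_{j=1}^n ( ∫₀^{t_j} a_j(0, …, 0, λ, t_{j+1}, …, t_n) dλ − α_j t_j ), where in the j-th summand the first j−1 arguments of a_j are 0, the j-th argument is the integration variable λ, and the last arguments are t_{j+1}, …, t_n, is smooth, 2π-periodic in each variable, and satisfies ∂_{t_j} A(t) = a_j(t) − α_j for every j ∈ {1,…,n} and every t ∈ ℝ^n. -/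
open Real MeasureTheory Metric Set ContinuousLinearMap

private lemma hone : ((⊤ : ℕ∞) : WithTop ℕ∞) ≠ 0 := by simp

section AuxLemmas

variable {E : Type} [NormedAddCommGroup E] [NormedSpace ℝ E] [FiniteDimensional ℝ E]

private lemma aux_hasFDerivAt {F : Type} [NormedAddCommGroup F] [NormedSpace ℝ F]
    [CompleteSpace F]
    (f : E × ℝ → F) (hf : ContDiff ℝ (⊤ : ℕ∞) f) (a b : ℝ) (x₀ : E) :
    HasFDerivAt (fun x => ∫ u in a..b, f (x, u))
      (∫ u in a..b, (fderiv ℝ f (x₀, u)).comp (ContinuousLinearMap.inl ℝ E ℝ)) x₀ := by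
  have hfc : Continuous f := hf.continuous
  have hdf : Continuous (fun p : E × ℝ => (fderiv ℝ f p).comp (ContinuousLinearMap.inl ℝ E ℝ)) :=
    (hf.continuous_fderiv hone).clm_comp continuous_const
  obtain ⟨C, hC⟩ := ((isCompact_closedBall x₀ 1).prod isCompact_uIcc).exists_bound_of_continuousOn
    hdf.continuousOn
  exact intervalIntegral.hasFDerivAt_integral_of_dominated_of_fderiv_le
    (F := fun x u => f (x, u))
    (F' := fun x u => (fderiv ℝ f (x, u)).comp (ContinuousLinearMap.inl ℝ E ℝ))
    (bound := fun _ => C) (ball_mem_nhds x₀ one_pos)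
    (Filter.Eventually.of_forall fun x => (hfc.comp (Continuous.prodMk_right x)).aestronglyMeasurable)
    ((hfc.comp (Continuous.prodMk_right x₀)).intervalIntegrable a b)
    ((hdf.comp (Continuous.prodMk_right x₀)).aestronglyMeasurable)
    (Filter.Eventually.of_forall fun u hu x hx =>
      hC ((x, u)) ⟨ball_subset_closedBall hx, uIoc_subset_uIcc hu⟩)
    intervalIntegrable_const
    (Filter.Eventually.of_forall fun u _ x _ =>
      ((hf.differentiable hone (x, u)).hasFDerivAt).comp x (hasFDerivAt_prodMk_left x u))

private lemma aux_contDiff_nat (a b : ℝ) :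
    ∀ (k : ℕ) (F : Type) (_ : NormedAddCommGroup F) (_ : @NormedSpace ℝ F _ _)
      (_ : CompleteSpace F)
      (f : E × ℝ → F), ContDiff ℝ (⊤ : ℕ∞) f →
      ContDiff ℝ (k : ℕ) (fun x : E => ∫ u in a..b, f (x, u)) := by
  intro k
  induction k with
  | zero =>
    intro F i1 i2 i3 f hf
    letI := i1; letI := i2; letI := i3
    have : Differentiable ℝ (fun x : E => ∫ u in a..b, f (x, u)) :=
      fun x => (aux_hasFDerivAt f hf a b x).differentiableAt
    exact contDiff_zero.2 this.continuous
  | succ k ih =>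
    intro F i1 i2 i3 f hf
    letI := i1; letI := i2; letI := i3
    rw [show ((k + 1 : ℕ) : WithTop ℕ∞) = (k : ℕ) + 1 by exact_mod_cast rfl,
      contDiff_succ_iff_fderiv]
    refine ⟨fun x => (aux_hasFDerivAt f hf a b x).differentiableAt, by simp, ?_⟩
    have hDf : ContDiff ℝ (⊤ : ℕ∞)
        (fun p : E × ℝ => (fderiv ℝ f p).comp (ContinuousLinearMap.inl ℝ E ℝ)) :=
      ((contDiff_infty_iff_fderiv.1 hf).2).clm_comp contDiff_const
    have heq : (fderiv ℝ (fun x : E => ∫ u in a..b, f (x, u)))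
        = fun x => ∫ u in a..b, (fderiv ℝ f (x, u)).comp (ContinuousLinearMap.inl ℝ E ℝ) :=
      funext fun x => (aux_hasFDerivAt f hf a b x).fderiv
    rw [heq]
    exact ih (E →L[ℝ] F) inferInstance inferInstance inferInstance _ hDf

private lemma aux_contDiff {F : Type} [NormedAddCommGroup F] [NormedSpace ℝ F]
    [CompleteSpace F] (a b : ℝ) (f : E × ℝ → F) (hf : ContDiff ℝ (⊤ : ℕ∞) f) :
    ContDiff ℝ (⊤ : ℕ∞) (fun x : E => ∫ u in a..b, f (x, u)) :=
  contDiff_infty.2 fun k => aux_contDiff_nat a b k F inferInstance inferInstance inferInstance f hf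

private lemma aux_primitive (f : E × ℝ → ℝ) (hf : ContDiff ℝ (⊤ : ℕ∞) f) :
    ContDiff ℝ (⊤ : ℕ∞) (fun p : E × ℝ => ∫ l in (0 : ℝ)..p.2, f (p.1, l)) := by
  have hg : ContDiff ℝ (⊤ : ℕ∞) (fun q : (E × ℝ) × ℝ => f (q.1.1, q.1.2 * q.2)) :=
    hf.comp ((contDiff_fst.comp contDiff_fst).prodMk
      ((contDiff_snd.comp contDiff_fst).mul contDiff_snd))
  have hK : ContDiff ℝ (⊤ : ℕ∞) (fun p : E × ℝ => ∫ u in (0 : ℝ)..1, f (p.1, p.2 * u)) :=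
    aux_contDiff 0 1 _ hg
  have heq : (fun p : E × ℝ => ∫ l in (0 : ℝ)..p.2, f (p.1, l))
      = fun p => p.2 * ∫ u in (0 : ℝ)..1, f (p.1, p.2 * u) := by
    funext p
    rcases eq_or_ne p.2 0 with h | h
    · simp [h]
    · have h2 := intervalIntegral.integral_comp_mul_left (a := 0) (b := 1)
        (fun l => f (p.1, l)) h
      rw [mul_zero, mul_one] at h2
      rw [h2, smul_eq_mul, ← mul_assoc, mul_inv_cancel₀ h, one_mul]
  rw [heq]
  exact contDiff_snd.mul hK

private lemma aux_hasDerivAt_param {g g' : ℝ → ℝ → ℝ}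
    (hg : Continuous fun p : ℝ × ℝ => g p.1 p.2)
    (hg' : Continuous fun p : ℝ × ℝ => g' p.1 p.2)
    (hdiff : ∀ s l, HasDerivAt (fun s => g s l) (g' s l) s) (c s₀ : ℝ) :
    HasDerivAt (fun s => ∫ l in (0 : ℝ)..c, g s l) (∫ l in (0 : ℝ)..c, g' s₀ l) s₀ := by
  obtain ⟨C, hC⟩ := ((isCompact_closedBall s₀ 1).prod isCompact_uIcc).exists_bound_of_continuousOn
    hg'.continuousOn
  exact (intervalIntegral.hasDerivAt_integral_of_dominated_loc_of_deriv_le (F := g) (F' := g')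
    (bound := fun _ => C) (ball_mem_nhds s₀ one_pos)
    (Filter.Eventually.of_forall fun x =>
      (hg.comp (Continuous.prodMk_right x)).aestronglyMeasurable)
    ((hg.comp (Continuous.prodMk_right s₀)).intervalIntegrable 0 c)
    ((hg'.comp (Continuous.prodMk_right s₀)).aestronglyMeasurable)
    (Filter.Eventually.of_forall fun l hl x hx =>
      hC ((x, l)) ⟨ball_subset_closedBall hx, uIoc_subset_uIcc hl⟩)
    intervalIntegrable_const
    (Filter.Eventually.of_forall fun l _ x _ => hdiff x l)).2

end AuxLemmas

set_option maxHeartbeats 2000000 in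
theorem stmt_6 (n : ℕ) (hn : 1 ≤ n) (a : Fin n → (Fin n → ℝ) → ℝ) (α : Fin n → ℝ)
    (ha : ∀ j, ContDiff ℝ (⊤ : ℕ∞) (a j))
    (hper : ∀ k j (t : Fin n → ℝ), a k (t + (2 * π) • (Pi.single j 1 : Fin n → ℝ)) = a k t)
    (hcomm : ∀ j k (t : Fin n → ℝ),
      fderiv ℝ (a k) t (Pi.single j 1) = fderiv ℝ (a j) t (Pi.single k 1))
    (havg : ∀ (j : Fin n) (t : Fin n → ℝ),
      (1 / (2 * π)) * ∫ l in (0 : ℝ)..(2 * π), a j (Function.update t j l) = α j)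
    (A : (Fin n → ℝ) → ℝ)
    (hA : ∀ t : Fin n → ℝ,
      A t = ∑ j, ((∫ l in (0 : ℝ)..(t j),
          a j (fun i => if i < j then 0 else if i = j then l else t i)) - α j * t j)) :
    ContDiff ℝ (⊤ : ℕ∞) A ∧
    (∀ (j : Fin n) (t : Fin n → ℝ), A (t + (2 * π) • (Pi.single j 1 : Fin n → ℝ)) = A t) ∧
    ∀ (j : Fin n) (t : Fin n → ℝ), fderiv ℝ A t (Pi.single j 1) = a j t - α j := by
  -- Smoothness
  have hsmooth : ContDiff ℝ (⊤ : ℕ∞) A := by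
    have hAeq : A = fun t => ∑ k, ((∫ l in (0 : ℝ)..(t k),
        a k (fun i => if i < k then 0 else if i = k then l else t i)) - α k * t k) :=
      funext hA
    rw [hAeq]
    refine ContDiff.sum (f := fun k (t : Fin n → ℝ) => (∫ l in (0 : ℝ)..(t k),
        a k (fun i => if i < k then 0 else if i = k then l else t i)) - α k * t k)
      (fun k _ => ?_)
    refine ContDiff.sub (f := fun t : Fin n → ℝ => ∫ l in (0 : ℝ)..(t k),
        a k (fun i => if i < k then 0 else if i = k then l else t i))
      (g := fun t : Fin n → ℝ => α k * t k) ?_ ?_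
    · have hinner : ContDiff ℝ (⊤ : ℕ∞) (fun q : (Fin n → ℝ) × ℝ =>
          (fun i => if i < k then 0 else if i = k then q.2 else q.1 i : Fin n → ℝ)) := by
        refine contDiff_pi.2 fun i => ?_
        by_cases h1 : i < k
        · simp only [if_pos h1]; exact contDiff_const
        · by_cases h2 : i = k
          · simp only [if_neg h1, if_pos h2]; exact contDiff_snd
          · simp only [if_neg h1, if_neg h2]
            exact ((ContinuousLinearMap.proj (R := ℝ) (φ := fun _ : Fin n => ℝ) i).contDiff).comp (contDiff_fst (E := Fin n → ℝ) (F := ℝ))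
      have hF : ContDiff ℝ (⊤ : ℕ∞) (fun q : (Fin n → ℝ) × ℝ =>
          a k (fun i => if i < k then 0 else if i = k then q.2 else q.1 i)) :=
        (ha k).comp hinner
      have hproj : ContDiff ℝ (⊤ : ℕ∞) (fun t : Fin n → ℝ => (t, t k)) :=
        contDiff_id.prodMk (ContinuousLinearMap.proj (R := ℝ) (φ := fun _ : Fin n => ℝ) k).contDiff
      have hres := (aux_primitive _ hF).comp hproj
      have heq : (fun t : Fin n → ℝ => ∫ l in (0 : ℝ)..(t k),
            a k (fun i => if i < k then 0 else if i = k then l else t i))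
          = ((fun p : (Fin n → ℝ) × ℝ => ∫ l in (0 : ℝ)..p.2,
              (fun q : (Fin n → ℝ) × ℝ =>
                a k (fun i => if i < k then 0 else if i = k then q.2 else q.1 i)) (p.1, l))
            ∘ (fun t : Fin n → ℝ => (t, t k))) := by
        funext t
        simp only [Function.comp]
      rw [heq]
      exact hres
    · exact contDiff_const.mul (ContinuousLinearMap.proj (R := ℝ) (φ := fun _ : Fin n => ℝ) k).contDiff
  -- Derivative
  have hder : ∀ (j : Fin n) (t : Fin n → ℝ), fderiv ℝ A t (Pi.single j 1) = a j t - α j := by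
    intro j t
    set ej : Fin n → ℝ := Pi.single j 1 with hej
    set b : ℕ → ℝ := fun m => a j (fun i => if (i : ℕ) < m then 0 else t i) with hbdef
    set f : ℕ → ℝ := (fun m => if m < (j : ℕ) then b m - b (m + 1)
      else if m = (j : ℕ) then b (j : ℕ) - α j else 0) with hfdef
    have hterm : ∀ k : Fin n, HasDerivAt (fun s : ℝ =>
        (∫ l in (0 : ℝ)..((t + s • ej) k),
          a k (fun i => if i < k then 0 else if i = k then l else (t + s • ej) i))
          - α k * ((t + s • ej) k)) (f (k : ℕ)) 0 := by
      intro k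
      rcases lt_trichotomy k j with hkj | hkj | hkj
      · -- k < j
        have hkj' : (k : ℕ) < (j : ℕ) := hkj
        have hkne : k ≠ j := Fin.ne_of_lt hkj
        set v : ℝ → (Fin n → ℝ) := fun l i => if i < k then 0 else if i = k then l else t i
          with hvdef
        have hlim : ∀ s : ℝ, (t + s • ej) k = t k := by
          intro s; simp [hej, Pi.single_apply, hkne]
        have hintg : ∀ (s l : ℝ),
            (fun i => if i < k then 0 else if i = k then l else (t + s • ej) i)
            = v l + s • ej := by
          intro s l; funext i
          by_cases h1 : i < k
          · have hij : i ≠ j := Fin.ne_of_lt (h1.trans hkj)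
            simp [hvdef, h1, hej, Pi.single_apply, hij]
          · by_cases h2 : i = k
            · simp [hvdef, h1, h2, hej, Pi.single_apply, hkne]
            · simp [hvdef, h1, h2, hej, Pi.single_apply]
        have hfun : (fun s : ℝ =>
            (∫ l in (0 : ℝ)..((t + s • ej) k),
              a k (fun i => if i < k then 0 else if i = k then l else (t + s • ej) i))
              - α k * ((t + s • ej) k))
            = fun s : ℝ => (∫ l in (0 : ℝ)..(t k), a k (v l + s • ej)) - α k * t k := by
          funext s
          simp only [hlim, hintg]
        rw [hfun]
        have hvcont : Continuous v := by
          apply continuous_pi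
          intro i
          by_cases h1 : i < k
          · simp only [hvdef, if_pos h1]; exact continuous_const
          · by_cases h2 : i = k
            · simp only [hvdef, if_neg h1, if_pos h2]; exact continuous_id
            · simp only [hvdef, if_neg h1, if_neg h2]; exact continuous_const
        have hwcont : Continuous (fun p : ℝ × ℝ => v p.2 + p.1 • ej) :=
          (hvcont.comp continuous_snd).add (continuous_fst.smul continuous_const)
        have hg : Continuous (fun p : ℝ × ℝ => a k (v p.2 + p.1 • ej)) :=
          (ha k).continuous.comp hwcont
        have hg' : Continuous (fun p : ℝ × ℝ => fderiv ℝ (a k) (v p.2 + p.1 • ej) ej) :=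
          (ContinuousLinearMap.apply ℝ ℝ ej).continuous.comp
            (((ha k).continuous_fderiv hone).comp hwcont)
        have hdiffg : ∀ s l : ℝ, HasDerivAt (fun s => a k (v l + s • ej))
            (fderiv ℝ (a k) (v l + s • ej) ej) s := by
          intro s l
          have hline : HasDerivAt (fun s : ℝ => v l + s • ej) ej s := by
            simpa using ((hasDerivAt_id s).smul_const ej).const_add (v l)
          have hAk : HasFDerivAt (a k) (fderiv ℝ (a k) (v l + s • ej)) (v l + s • ej) :=
            ((ha k).differentiable hone _).hasFDerivAt
          exact hAk.comp_hasDerivAt s hline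
        have hmain := (aux_hasDerivAt_param (g := fun s l => a k (v l + s • ej))
          (g' := fun s l => fderiv ℝ (a k) (v l + s • ej) ej) hg hg' hdiffg (t k) 0).sub_const
          (α k * t k)
        have hval : (∫ l in (0 : ℝ)..(t k), fderiv ℝ (a k) (v l + (0 : ℝ) • ej) ej)
            = f (k : ℕ) := by
          have hveq : ∀ l : ℝ, v l + (0 : ℝ) • ej = v l := by intro l; simp
          have hstep1 : ∀ l : ℝ, fderiv ℝ (a k) (v l + (0 : ℝ) • ej) ej
              = fderiv ℝ (a j) (v l) (Pi.single k 1) := by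
            intro l; rw [hveq l, hej]; exact hcomm j k (v l)
          simp only [hstep1]
          have hvl : ∀ l : ℝ, v l = v 0 + l • (Pi.single k 1 : Fin n → ℝ) := by
            intro l; funext i
            by_cases h1 : i < k
            · have : i ≠ k := Fin.ne_of_lt h1
              simp [hvdef, h1, Pi.single_apply, this]
            · by_cases h2 : i = k
              · simp [hvdef, h1, h2, Pi.single_apply]
              · simp [hvdef, h1, h2, Pi.single_apply]
          have hdere : ∀ l ∈ uIcc (0 : ℝ) (t k), HasDerivAt (fun l => a j (v l))
              (fderiv ℝ (a j) (v l) (Pi.single k 1)) l := by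
            intro l _
            have hline : HasDerivAt (fun l : ℝ => v 0 + l • (Pi.single k 1 : Fin n → ℝ))
                (Pi.single k 1) l := by
              simpa using ((hasDerivAt_id l).smul_const
                (Pi.single k 1 : Fin n → ℝ)).const_add (v 0)
            have hline' : HasDerivAt v (Pi.single k 1) l := by
              rw [show v = fun l : ℝ => v 0 + l • (Pi.single k 1 : Fin n → ℝ) from funext hvl]
              exact hline
            have hAj : HasFDerivAt (a j) (fderiv ℝ (a j) (v l)) (v l) :=
              ((ha j).differentiable hone _).hasFDerivAt
            exact hAj.comp_hasDerivAt l hline'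
          have hintc : IntervalIntegrable (fun l => fderiv ℝ (a j) (v l) (Pi.single k 1))
              volume 0 (t k) := by
            apply Continuous.intervalIntegrable
            exact (ContinuousLinearMap.apply ℝ ℝ (Pi.single k 1 : Fin n → ℝ)).continuous.comp
              (((ha j).continuous_fderiv hone).comp hvcont)
          rw [intervalIntegral.integral_eq_sub_of_hasDerivAt hdere hintc]
          have hbk : a j (v (t k)) = b (k : ℕ) := by
            rw [hbdef]; congr 1; funext i
            by_cases h1 : i < k
            · simp [hvdef, h1, Fin.lt_def.1 h1]
            · by_cases h2 : i = k
              · have : ¬ ((i : ℕ) < (k : ℕ)) := by simp [h2]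
                simp [hvdef, h1, h2, this]
              · have : ¬ ((i : ℕ) < (k : ℕ)) := fun hc => h1 (Fin.lt_def.2 hc)
                simp [hvdef, h1, h2, this]
          have hbk1 : a j (v 0) = b ((k : ℕ) + 1) := by
            rw [hbdef]; congr 1; funext i
            by_cases h1 : i < k
            · have : (i : ℕ) < (k : ℕ) + 1 := by
                have := Fin.lt_def.1 h1; omega
              simp [hvdef, h1, this]
            · by_cases h2 : i = k
              · have : (i : ℕ) < (k : ℕ) + 1 := by simp [h2]
                simp [hvdef, h1, h2, this]
              · have h3 : ¬ ((i : ℕ) < (k : ℕ)) := fun hc => h1 (Fin.lt_def.2 hc)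
                have h4 : (i : ℕ) ≠ (k : ℕ) := fun hc => h2 (Fin.ext hc)
                have : ¬ ((i : ℕ) < (k : ℕ) + 1) := by omega
                simp [hvdef, h1, h2, this]
          rw [hbk, hbk1, hfdef]
          simp [hkj']
        rw [← hval]
        exact hmain
      · -- k = j
        subst hkj
        have hjj : ∀ s : ℝ, (t + s • ej) k = t k + s := by
          intro s; simp [hej, Pi.single_apply]
        have hintg : ∀ (s l : ℝ),
            (fun i => if i < k then 0 else if i = k then l else (t + s • ej) i)
            = (fun i => if i < k then 0 else if i = k then l else t i) := by
          intro s l; funext i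
          by_cases h1 : i < k
          · simp [h1]
          · by_cases h2 : i = k
            · simp [h1, h2]
            · simp [h1, h2, hej, Pi.single_apply]
        have hfun : (fun s : ℝ =>
            (∫ l in (0 : ℝ)..((t + s • ej) k),
              a k (fun i => if i < k then 0 else if i = k then l else (t + s • ej) i))
              - α k * ((t + s • ej) k))
            = fun s : ℝ => (∫ l in (0 : ℝ)..(t k + s),
              a k (fun i => if i < k then 0 else if i = k then l else t i))
              - α k * (t k + s) := by
          funext s
          simp only [hjj, hintg]
        rw [hfun]
        have hcont : Continuous (fun l : ℝ =>
            a k (fun i => if i < k then 0 else if i = k then l else t i)) := by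
          apply (ha k).continuous.comp
          apply continuous_pi
          intro i
          by_cases h1 : i < k
          · simp only [if_pos h1]; exact continuous_const
          · by_cases h2 : i = k
            · simp only [if_neg h1, if_pos h2]; exact continuous_id
            · simp only [if_neg h1, if_neg h2]; exact continuous_const
        have hI : HasDerivAt (fun y : ℝ => ∫ l in (0 : ℝ)..y,
            a k (fun i => if i < k then 0 else if i = k then l else t i))
            (a k (fun i => if i < k then 0 else if i = k then t k else t i)) (t k) :=
          (hcont.integral_hasStrictDerivAt 0 (t k)).hasDerivAt
        have hinner : HasDerivAt (fun s : ℝ => t k + s) 1 0 := by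
          simpa using (hasDerivAt_id (0 : ℝ)).const_add (t k)
        have hI0 : HasDerivAt (fun y : ℝ => ∫ l in (0 : ℝ)..y,
            a k (fun i => if i < k then 0 else if i = k then l else t i))
            (a k (fun i => if i < k then 0 else if i = k then t k else t i)) (t k + 0) := by
          rwa [add_zero]
        have hI2 := hI0.comp 0 hinner
        have hs2 : HasDerivAt (fun s : ℝ => α k * (t k + s)) (α k) 0 := by
          simpa using ((hasDerivAt_id (0 : ℝ)).const_add (t k)).const_mul (α k)
        have htotal := hI2.sub hs2
        have hvalue : a k (fun i => if i < k then 0 else if i = k then t k else t i) * 1 - α k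
            = f (k : ℕ) := by
          have hbk : a k (fun i => if i < k then 0 else if i = k then t k else t i)
              = b (k : ℕ) := by
            rw [hbdef]; congr 1; funext i
            by_cases h1 : i < k
            · simp [h1, Fin.lt_def.1 h1]
            · by_cases h2 : i = k
              · have : ¬ ((i : ℕ) < (k : ℕ)) := by simp [h2]
                simp [h1, h2, this]
              · have : ¬ ((i : ℕ) < (k : ℕ)) := fun hc => h1 (Fin.lt_def.2 hc)
                simp [h1, h2, this]
          rw [hbk, hfdef]
          simp
        rw [← hvalue]
        exact htotal
      · -- j < k
        have hkne : k ≠ j := Ne.symm (Fin.ne_of_lt hkj)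
        have hlim : ∀ s : ℝ, (t + s • ej) k = t k := by
          intro s; simp [hej, Pi.single_apply, hkne]
        have hintg : ∀ (s l : ℝ),
            (fun i => if i < k then 0 else if i = k then l else (t + s • ej) i)
            = (fun i => if i < k then 0 else if i = k then l else t i) := by
          intro s l; funext i
          by_cases h1 : i < k
          · simp [h1]
          · by_cases h2 : i = k
            · simp [h1, h2]
            · have hij : i ≠ j := by
                intro h; exact h1 (h ▸ hkj)
              simp [h1, h2, hej, Pi.single_apply, hij]
        have hfun : (fun s : ℝ =>
            (∫ l in (0 : ℝ)..((t + s • ej) k),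
              a k (fun i => if i < k then 0 else if i = k then l else (t + s • ej) i))
              - α k * ((t + s • ej) k))
            = fun _ : ℝ => (∫ l in (0 : ℝ)..(t k),
              a k (fun i => if i < k then 0 else if i = k then l else t i)) - α k * t k := by
          funext s
          simp only [hlim, hintg]
        rw [hfun]
        have hf0 : f (k : ℕ) = 0 := by
          rw [hfdef]
          have h1 : ¬ ((k : ℕ) < (j : ℕ)) := by
            have := Fin.lt_def.1 hkj; omega
          have h2 : ¬ ((k : ℕ) = (j : ℕ)) := fun hc => hkne (Fin.ext hc)
          simp [h1, h2]
        rw [hf0]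
        exact hasDerivAt_const 0 _
    have hsum0 : ∑ k : Fin n, f (k : ℕ) = a j t - α j := by
      rw [Fin.sum_univ_eq_sum_range f n]
      have hsub : ∑ m ∈ Finset.range n, f m = ∑ m ∈ Finset.range ((j : ℕ) + 1), f m := by
        refine (Finset.sum_subset (Finset.range_subset_range.2 j.isLt) ?_).symm
        intro m hm hnm
        rw [Finset.mem_range, not_lt] at hnm
        rw [hfdef]
        have h1 : ¬ m < (j : ℕ) := by omega
        have h2 : ¬ m = (j : ℕ) := by omega
        simp [h1, h2]
      rw [hsub, Finset.sum_range_succ]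
      have hlast : f (j : ℕ) = b (j : ℕ) - α j := by rw [hfdef]; simp
      have hrest : ∑ m ∈ Finset.range (j : ℕ), f m = b 0 - b (j : ℕ) := by
        have hc : ∀ m ∈ Finset.range (j : ℕ), f m = b m - b (m + 1) := fun m hm => by
          rw [hfdef]; simp [Finset.mem_range.1 hm]
        rw [Finset.sum_congr rfl hc]
        exact Finset.sum_range_sub' b (j : ℕ)
      rw [hrest, hlast]
      have hb0 : b 0 = a j t := by rw [hbdef]; simp
      rw [hb0]; ring
    have key : HasDerivAt (fun s : ℝ => A (t + s • ej)) (a j t - α j) 0 := by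
      have h1 : (fun s : ℝ => A (t + s • ej)) = fun s : ℝ => ∑ k : Fin n,
          ((∫ l in (0 : ℝ)..((t + s • ej) k),
            a k (fun i => if i < k then 0 else if i = k then l else (t + s • ej) i))
            - α k * ((t + s • ej) k)) := funext fun s => hA _
      rw [h1, ← hsum0]
      exact HasDerivAt.fun_sum fun k _ => hterm k
    have hAd : HasDerivAt (fun s : ℝ => A (t + s • ej)) (fderiv ℝ A t ej) 0 := by
      have hline : HasDerivAt (fun s : ℝ => t + s • ej) ej 0 := by
        simpa using ((hasDerivAt_id (0 : ℝ)).smul_const ej).const_add t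
      have h0 : HasFDerivAt A (fderiv ℝ A t) (t + (0 : ℝ) • ej) := by
        simpa using (hsmooth.differentiable hone t).hasFDerivAt
      exact h0.comp_hasDerivAt 0 hline
    exact hAd.unique key
  -- Periodicity
  have hper' : ∀ (j : Fin n) (t : Fin n → ℝ),
      A (t + (2 * π) • (Pi.single j 1 : Fin n → ℝ)) = A t := by
    intro j t
    have hlinecont : Continuous (fun s : ℝ => t + s • (Pi.single j 1 : Fin n → ℝ)) :=
      continuous_const.add (continuous_id.smul continuous_const)
    have hψ : ∀ s ∈ uIcc (0 : ℝ) (2 * π),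
        HasDerivAt (fun s : ℝ => A (t + s • (Pi.single j 1 : Fin n → ℝ)))
        (a j (t + s • (Pi.single j 1 : Fin n → ℝ)) - α j) s := by
      intro s _
      have hline : HasDerivAt (fun u : ℝ => t + u • (Pi.single j 1 : Fin n → ℝ))
          (Pi.single j 1) s := by
        simpa using ((hasDerivAt_id s).smul_const (Pi.single j 1 : Fin n → ℝ)).const_add t
      have h0 : HasFDerivAt A (fderiv ℝ A (t + s • (Pi.single j 1 : Fin n → ℝ)))
          (t + s • (Pi.single j 1 : Fin n → ℝ)) :=
        (hsmooth.differentiable hone _).hasFDerivAt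
      have h2 := h0.comp_hasDerivAt s hline
      rwa [hder j (t + s • (Pi.single j 1 : Fin n → ℝ))] at h2
    have hint1 : IntervalIntegrable
        (fun s : ℝ => a j (t + s • (Pi.single j 1 : Fin n → ℝ))) volume 0 (2 * π) :=
      ((ha j).continuous.comp hlinecont).intervalIntegrable 0 (2 * π)
    have hint : IntervalIntegrable
        (fun s : ℝ => a j (t + s • (Pi.single j 1 : Fin n → ℝ)) - α j) volume 0 (2 * π) :=
      hint1.sub intervalIntegrable_const
    have hFTC := intervalIntegral.integral_eq_sub_of_hasDerivAt hψ hint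
    have hupd : ∀ s : ℝ, t + s • (Pi.single j 1 : Fin n → ℝ)
        = Function.update t j (s + t j) := by
      intro s; funext i
      by_cases h : i = j
      · subst h; simp [Function.update_self, Pi.single_apply]; ring
      · simp [Function.update_of_ne h, Pi.single_apply, h]
    have hphiper : Function.Periodic (fun l : ℝ => a j (Function.update t j l)) (2 * π) := by
      intro l
      have hupd2 : Function.update t j (l + 2 * π)
          = Function.update t j l + (2 * π) • (Pi.single j 1 : Fin n → ℝ) := by
        funext i
        by_cases h : i = j
        · subst h; simp [Function.update_self, Pi.single_apply]
        · simp [Function.update_of_ne h, Pi.single_apply, h]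
      simp only [hupd2]
      rw [hper j j]
    have hIval : (∫ s in (0 : ℝ)..(2 * π), a j (t + s • (Pi.single j 1 : Fin n → ℝ)))
        = 2 * π * α j := by
      calc (∫ s in (0 : ℝ)..(2 * π), a j (t + s • (Pi.single j 1 : Fin n → ℝ)))
          = ∫ s in (0 : ℝ)..(2 * π),
            (fun l : ℝ => a j (Function.update t j l)) (s + t j) := by
            simp only [hupd]
        _ = ∫ l in (0 : ℝ) + t j..(2 * π) + t j, a j (Function.update t j l) :=
            intervalIntegral.integral_comp_add_right (fun l : ℝ => a j (Function.update t j l))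
              (t j)
        _ = ∫ l in (t j)..(t j + 2 * π), a j (Function.update t j l) := by
            rw [zero_add, add_comm (2 * π) (t j)]
        _ = ∫ l in (0 : ℝ)..(0 + 2 * π), a j (Function.update t j l) :=
            hphiper.intervalIntegral_add_eq (t j) 0
        _ = ∫ l in (0 : ℝ)..(2 * π), a j (Function.update t j l) := by rw [zero_add]
        _ = 2 * π * α j := by
            have h3 := havg j t
            have h2pi : (2 * π : ℝ) ≠ 0 := by positivity
            field_simp at h3
            linarith [h3]
    have hL : (∫ s in (0 : ℝ)..(2 * π),
        (a j (t + s • (Pi.single j 1 : Fin n → ℝ)) - α j)) = 0 := by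
      rw [intervalIntegral.integral_sub hint1 intervalIntegrable_const, hIval,
        intervalIntegral.integral_const]
      simp [smul_eq_mul]
    rw [hL] at hFTC
    have h0s : t + (0 : ℝ) • (Pi.single j 1 : Fin n → ℝ) = t := by simp
    rw [h0s] at hFTC
    linarith [hFTC]
  exact ⟨hsmooth, hper', hder⟩
end

section
/- Let α ∈ ℝ with e^(2πiα) ≠ 1, let f : ℝ → ℂ be continuous and 2π-periodic, and let v : ℝ → ℂ be differentiable and 2π-periodic with v′(s) + iα v(s) = f(s) for every s ∈ ℝ. Then for every t ∈ ℝ, |v(t)| ≤ (2π / |e^(2πiα) − 1|) · sup_{s∈ℝ} |f(s)|. -/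
open Real

theorem stmt_9 (α : ℝ)
    (hα : Complex.exp (2 * (π : ℂ) * Complex.I * (α : ℂ)) ≠ 1)
    (f : ℝ → ℂ) (hf : Continuous f) (hfper : ∀ s, f (s + 2 * π) = f s)
    (v : ℝ → ℂ) (hv : Differentiable ℝ v) (hvper : ∀ s, v (s + 2 * π) = v s)
    (hode : ∀ s, deriv v s + Complex.I * (α : ℂ) * v s = f s) :
    ∀ t : ℝ, ‖v t‖ ≤
      (2 * π / ‖Complex.exp (2 * (π : ℂ) * Complex.I * (α : ℂ)) - 1‖) *
        ⨆ s : ℝ, ‖f s‖ := by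
  intro t
  set E : ℂ := Complex.exp (2 * (π : ℂ) * Complex.I * (α : ℂ)) with hE
  have hEne : E - 1 ≠ 0 := sub_ne_zero.2 hα
  have hEpos : 0 < ‖E - 1‖ := by
    simpa [norm_pos_iff] using hEne
  -- bound on f
  have hper : Function.Periodic (fun s => ‖f s‖) (2 * π) := fun s => by
    simp [hfper s]
  have hbdd : BddAbove (Set.range fun s => ‖f s‖) := by
    rw [← hper.image_Icc two_pi_pos 0]
    exact ((isCompact_Icc).image (continuous_norm.comp hf)).bddAbove
  set M : ℝ := ⨆ s : ℝ, ‖f s‖ with hM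
  have hfM : ∀ s, ‖f s‖ ≤ M := fun s => le_ciSup hbdd s
  -- the auxiliary function
  set w : ℝ → ℂ := fun s => Complex.exp ((s : ℂ) * Complex.I * (α : ℂ)) * v (t + s) with hw
  have hderiv : ∀ s : ℝ, HasDerivAt w (Complex.exp ((s : ℂ) * Complex.I * (α : ℂ)) * f (t + s)) s := by
    intro s
    have h1c : HasDerivAt (fun z : ℂ => Complex.exp (z * Complex.I * (α : ℂ)))
        (Complex.I * (α : ℂ) * Complex.exp ((s : ℂ) * Complex.I * (α : ℂ))) (s : ℂ) := by
      have hlin : HasDerivAt (fun z : ℂ => z * Complex.I * (α : ℂ))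
          (Complex.I * (α : ℂ)) (s : ℂ) := by
        simpa [mul_assoc] using (hasDerivAt_id ((s : ℂ))).mul_const (Complex.I * (α : ℂ))
      simpa [mul_comm] using hlin.cexp
    have h1 : HasDerivAt (fun s : ℝ => Complex.exp ((s : ℂ) * Complex.I * (α : ℂ)))
        (Complex.I * (α : ℂ) * Complex.exp ((s : ℂ) * Complex.I * (α : ℂ))) s :=
      h1c.comp_ofReal
    have h2 : HasDerivAt (fun s : ℝ => v (t + s)) (deriv v (t + s)) s := by
      have hid : HasDerivAt (fun x : ℝ => t + x) 1 s := by
        simpa using (hasDerivAt_id s).const_add t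
      have h3 := ((hv (t + s)).hasDerivAt).scomp s hid
      rw [one_smul] at h3
      exact h3
    have := h1.mul h2
    refine this.congr_deriv ?_
    have hd : deriv v (t + s) = f (t + s) - Complex.I * (α : ℂ) * v (t + s) := by
      linear_combination hode (t + s)
    rw [hd]; ring
  have hint : ∫ s in (0:ℝ)..(2*π), Complex.exp ((s : ℂ) * Complex.I * (α : ℂ)) * f (t + s)
      = w (2*π) - w 0 := by
    apply intervalIntegral.integral_eq_sub_of_hasDerivAt (fun s _ => hderiv s)
    apply Continuous.intervalIntegrable
    exact (Complex.continuous_exp.comp (by continuity)).mul (hf.comp (by continuity))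
  have hw0 : w 0 = v t := by simp [hw]
  have hw2 : w (2*π) = E * v t := by
    simp only [hw, hE]
    rw [show t + 2*π = t + 2*π from rfl, hvper t]
    push_cast
    ring_nf
  have hrep : (E - 1) * v t
      = ∫ s in (0:ℝ)..(2*π), Complex.exp ((s : ℂ) * Complex.I * (α : ℂ)) * f (t + s) := by
    rw [hint, hw0, hw2]; ring
  have hnorm : ‖(E - 1) * v t‖ ≤ M * (2*π) := by
    rw [hrep]
    have hb := intervalIntegral.norm_integral_le_of_norm_le_const
      (C := M) (f := fun s => Complex.exp ((s : ℂ) * Complex.I * (α : ℂ)) * f (t + s))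
      (a := 0) (b := 2*π) ?_
    · rw [sub_zero, abs_of_nonneg two_pi_pos.le] at hb
      exact hb
    · intro x _
      rw [norm_mul]
      have : ‖Complex.exp ((x : ℂ) * Complex.I * (α : ℂ))‖ = 1 := by
        rw [Complex.norm_exp]
        simp [Complex.mul_re, Complex.mul_im]
      rw [this, one_mul]
      exact hfM (t + x)
  rw [norm_mul] at hnorm
  rw [div_mul_eq_mul_div, le_div_iff₀ hEpos]
  calc ‖v t‖ * ‖E - 1‖
      = ‖E - 1‖ * ‖v t‖ := by ring
    _ ≤ M * (2*π) := hnorm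
    _ = 2 * π * M := by ring
end

section
/- Let n ≥ 1 and let a_1, …, a_n : ℝ^n → ℝ be smooth functions, 2π-periodic in each variable. For each ξ ∈ ℤ let u_ξ : ℝ^n → ℂ be smooth, and for j ∈ {1,…,n} set f_{j,ξ}(t) = ∂_{t_j} u_ξ(t) + i a_j(t) ξ u_ξ(t). Assume: (i) for every k ∈ ℕ there is C_k > 0 such that |u_ξ(t)| ≤ C_k (1+|ξ|)^(−k) for all t ∈ ℝ^n and ξ ∈ ℤ; (ii) for every j ∈ {1,…,n}, every multi-index α ∈ ℕ^n and every k ∈ ℕ there is C_{α,j,k} > 0 such that |∂_t^α f_{j,ξ}(t)| ≤ C_{α,j,k} (1+|ξ|)^(−k) for all t ∈ ℝ^n and ξ ∈ ℤ. Then for every multi-index α ∈ ℕ^n and every k ∈ ℕ there is C_{α,k} > 0 such that |∂_t^α u_ξ(t)| ≤ C_{α,k} (1+|ξ|)^(−k) for all t ∈ ℝ^n and ξ ∈ ℤ. -/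
open Real

/-- Partial derivative in the `j`-th coordinate direction. -/
noncomputable def pd (n : ℕ) (j : Fin n) (g : (Fin n → ℝ) → ℂ) : (Fin n → ℝ) → ℂ :=
  fun t => fderiv ℝ g t (Pi.single j 1)

/-- Multi-index derivative `∂^α = ∂_1^{α 1} ⋯ ∂_n^{α n}`. -/
noncomputable def mderiv (n : ℕ) (α : Fin n → ℕ) (g : (Fin n → ℝ) → ℂ) : (Fin n → ℝ) → ℂ :=
  (List.finRange n).foldr (fun j G => (pd n j)^[α j] G) g

variable {n : ℕ}

lemma diff_of_top {g : (Fin n → ℝ) → ℂ} (hg : ContDiff ℝ (⊤ : ℕ∞) g) : Differentiable ℝ g :=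
  hg.differentiable (by simp)

lemma pd_contDiff {g : (Fin n → ℝ) → ℂ} (hg : ContDiff ℝ (⊤ : ℕ∞) g) (j : Fin n) :
    ContDiff ℝ (⊤ : ℕ∞) (pd n j g) :=
  (hg.fderiv_right (by exact_mod_cast le_top)).clm_apply contDiff_const

lemma pd_add {g h : (Fin n → ℝ) → ℂ} (hg : ContDiff ℝ (⊤ : ℕ∞) g) (hh : ContDiff ℝ (⊤ : ℕ∞) h)
    (j : Fin n) :
    pd n j (fun t => g t + h t) = fun t => pd n j g t + pd n j h t := by
  funext t
  simp only [pd, fderiv_fun_add (diff_of_top hg t)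
    (diff_of_top hh t), ContinuousLinearMap.add_apply]

lemma pd_const_mul {g : (Fin n → ℝ) → ℂ} (hg : ContDiff ℝ (⊤ : ℕ∞) g) (c : ℂ) (j : Fin n) :
    pd n j (fun t => c * g t) = fun t => c * pd n j g t := by
  funext t
  simp only [pd, fderiv_const_mul (diff_of_top hg t) c,
    ContinuousLinearMap.smul_apply, smul_eq_mul]

lemma pd_mul {g h : (Fin n → ℝ) → ℂ} (hg : ContDiff ℝ (⊤ : ℕ∞) g) (hh : ContDiff ℝ (⊤ : ℕ∞) h)
    (j : Fin n) :
    pd n j (fun t => g t * h t) = fun t => pd n j g t * h t + g t * pd n j h t := by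
  funext t
  simp only [pd, fderiv_fun_mul (diff_of_top hg t)
    (diff_of_top hh t), ContinuousLinearMap.add_apply,
    ContinuousLinearMap.smul_apply, smul_eq_mul]
  ring

lemma iter_contDiff (j : Fin n) (m : ℕ) {g : (Fin n → ℝ) → ℂ} (hg : ContDiff ℝ (⊤ : ℕ∞) g) :
    ContDiff ℝ (⊤ : ℕ∞) ((pd n j)^[m] g) := by
  induction m generalizing g with
  | zero => exact hg
  | succ m ih =>
    rw [Function.iterate_succ_apply]
    exact ih (pd_contDiff hg j)

lemma md_contDiff (α : Fin n → ℕ) (l : List (Fin n)) {g : (Fin n → ℝ) → ℂ}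
    (hg : ContDiff ℝ (⊤ : ℕ∞) g) :
    ContDiff ℝ (⊤ : ℕ∞) (l.foldr (fun j G => (pd n j)^[α j] G) g) := by
  induction l generalizing g with
  | nil => exact hg
  | cons i l ih => exact iter_contDiff i (α i) (ih hg)

lemma mderiv_contDiff (α : Fin n → ℕ) {g : (Fin n → ℝ) → ℂ} (hg : ContDiff ℝ (⊤ : ℕ∞) g) :
    ContDiff ℝ (⊤ : ℕ∞) (mderiv n α g) :=
  md_contDiff α _ hg

lemma iter_add (j : Fin n) (m : ℕ) {g h : (Fin n → ℝ) → ℂ} (hg : ContDiff ℝ (⊤ : ℕ∞) g)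
    (hh : ContDiff ℝ (⊤ : ℕ∞) h) :
    (pd n j)^[m] (fun t => g t + h t) = fun t => (pd n j)^[m] g t + (pd n j)^[m] h t := by
  induction m generalizing g h with
  | zero => rfl
  | succ m ih =>
    rw [Function.iterate_succ_apply, Function.iterate_succ_apply, Function.iterate_succ_apply,
      pd_add hg hh]
    exact ih (pd_contDiff hg j) (pd_contDiff hh j)

lemma iter_const_mul (j : Fin n) (m : ℕ) {g : (Fin n → ℝ) → ℂ} (hg : ContDiff ℝ (⊤ : ℕ∞) g)
    (c : ℂ) :
    (pd n j)^[m] (fun t => c * g t) = fun t => c * (pd n j)^[m] g t := by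
  induction m generalizing g with
  | zero => rfl
  | succ m ih =>
    rw [Function.iterate_succ_apply, Function.iterate_succ_apply, pd_const_mul hg]
    exact ih (pd_contDiff hg j)

lemma mderiv_add (α : Fin n → ℕ) {g h : (Fin n → ℝ) → ℂ} (hg : ContDiff ℝ (⊤ : ℕ∞) g)
    (hh : ContDiff ℝ (⊤ : ℕ∞) h) :
    mderiv n α (fun t => g t + h t) = fun t => mderiv n α g t + mderiv n α h t := by
  rw [mderiv, mderiv, mderiv]
  generalize (List.finRange n) = l
  induction l generalizing g h with
  | nil => rfl
  | cons i l ih =>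
    simp only [List.foldr_cons]
    rw [ih hg hh]
    exact iter_add i (α i) (md_contDiff α l hg) (md_contDiff α l hh)

lemma mderiv_const_mul (α : Fin n → ℕ) {g : (Fin n → ℝ) → ℂ} (hg : ContDiff ℝ (⊤ : ℕ∞) g)
    (c : ℂ) :
    mderiv n α (fun t => c * g t) = fun t => c * mderiv n α g t := by
  rw [mderiv, mderiv]
  generalize (List.finRange n) = l
  induction l generalizing g with
  | nil => rfl
  | cons i l ih =>
    simp only [List.foldr_cons]
    rw [ih hg]
    exact iter_const_mul i (α i) (md_contDiff α l hg) c

lemma md_zero (α : Fin n → ℕ) (l : List (Fin n)) (g : (Fin n → ℝ) → ℂ)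
    (h : ∀ i ∈ l, α i = 0) : l.foldr (fun j G => (pd n j)^[α j] G) g = g := by
  induction l with
  | nil => rfl
  | cons i l ih =>
    simp only [List.foldr_cons, ih (fun i hi => h i (List.mem_cons_of_mem _ hi)),
      h i List.mem_cons_self, Function.iterate_zero, id]

lemma mderiv_zero {α : Fin n → ℕ} (h : ∀ i, α i = 0) (g : (Fin n → ℝ) → ℂ) :
    mderiv n α g = g :=
  md_zero α _ g (fun i _ => h i)

lemma md_peel (α : Fin n → ℕ) (j : Fin n) (hj : α j ≠ 0) (htop : ∀ i, j < i → α i = 0)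
    (g : (Fin n → ℝ) → ℂ) (l : List (Fin n)) (hl : l.Pairwise (· < ·)) (hjl : j ∈ l) :
    l.foldr (fun i G => (pd n i)^[α i] G) g
      = l.foldr (fun i G => (pd n i)^[Function.update α j (α j - 1) i] G) (pd n j g) := by
  induction l with
  | nil => simp at hjl
  | cons i l ih =>
    rcases List.pairwise_cons.mp hl with ⟨hilt, hl'⟩
    by_cases hij : i = j
    · subst hij
      have hrest : ∀ i' ∈ l, α i' = 0 := fun i' hi' => htop i' (hilt i' hi')
      have hrest' : ∀ i' ∈ l, Function.update α i (α i - 1) i' = 0 := by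
        intro i' hi'
        rw [Function.update_of_ne (ne_of_gt (hilt i' hi'))]
        exact hrest i' hi'
      simp only [List.foldr_cons, md_zero α l g hrest, md_zero _ l (pd n i g) hrest',
        Function.update_self]
      conv_lhs => rw [show α i = (α i - 1) + 1 from (Nat.succ_pred_eq_of_pos (Nat.pos_of_ne_zero hj)).symm]
      rw [Function.iterate_succ_apply]
    · have hjl' : j ∈ l := by
        rcases List.mem_cons.mp hjl with h | h
        · exact absurd h.symm hij
        · exact h
      simp only [List.foldr_cons, ih hl' hjl', Function.update_of_ne hij]

lemma mderiv_peel (α : Fin n → ℕ) (j : Fin n) (hj : α j ≠ 0) (htop : ∀ i, j < i → α i = 0)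
    (g : (Fin n → ℝ) → ℂ) :
    mderiv n α g = mderiv n (Function.update α j (α j - 1)) (pd n j g) :=
  md_peel α j hj htop g _ (List.pairwise_lt_finRange n) (List.mem_finRange j)

def Per (g : (Fin n → ℝ) → ℂ) : Prop :=
  ∀ (k : Fin n) (t : Fin n → ℝ), g (t + (2 * π) • (Pi.single k 1 : Fin n → ℝ)) = g t

lemma pd_per {g : (Fin n → ℝ) → ℂ} (hg : ContDiff ℝ (⊤ : ℕ∞) g) (hper : Per g) (j : Fin n) :
    Per (pd n j g) := by
  intro k t
  have hTr : ∀ s : Fin n → ℝ,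
      fderiv ℝ g s = fderiv ℝ g (s + (2 * π) • (Pi.single k 1 : Fin n → ℝ)) := by
    intro s
    have hfun : (fun x : Fin n → ℝ => g (x + (2 * π) • (Pi.single k 1 : Fin n → ℝ))) = g := by
      funext x; exact hper k x
    have h1 : HasFDerivAt (fun x : Fin n → ℝ => g (x + (2 * π) • (Pi.single k 1 : Fin n → ℝ)))
        (fderiv ℝ g (s + (2 * π) • (Pi.single k 1 : Fin n → ℝ))) s := by
      have hin : HasFDerivAt (fun x : Fin n → ℝ => x + (2 * π) • (Pi.single k 1 : Fin n → ℝ))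
          (ContinuousLinearMap.id ℝ (Fin n → ℝ)) s := (hasFDerivAt_id s).add_const _
      have hout := (diff_of_top hg (s + (2 * π) • (Pi.single k 1 : Fin n → ℝ))).hasFDerivAt
      simpa [Function.comp_def] using hout.comp s hin
    conv_lhs => rw [← hfun]
    exact h1.fderiv
  simp only [pd]
  rw [← hTr t]

lemma iter_per {g : (Fin n → ℝ) → ℂ} (hg : ContDiff ℝ (⊤ : ℕ∞) g) (hper : Per g) (j : Fin n)
    (m : ℕ) : Per ((pd n j)^[m] g) := by
  induction m generalizing g with
  | zero => exact hper
  | succ m ih =>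
    rw [Function.iterate_succ_apply]
    exact ih (pd_contDiff hg j) (pd_per hg hper j)

lemma bounded_of_per {g : (Fin n → ℝ) → ℂ} (hg : Continuous g) (hper : Per g) :
    ∃ M : ℝ, ∀ t, ‖g t‖ ≤ M := by
  -- integer shifts in one coordinate
  have hper1 : ∀ (k : Fin n) (m : ℤ) (t : Fin n → ℝ),
      g (t + (2 * π * m) • (Pi.single k 1 : Fin n → ℝ)) = g t := by
    intro k m
    induction m using Int.induction_on with
    | zero => intro t; simp
    | succ m ihm =>
      intro t
      have : t + (2 * π * ((m : ℤ) + 1 : ℤ)) • (Pi.single k 1 : Fin n → ℝ)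
          = (t + (2 * π * (m : ℤ)) • (Pi.single k 1 : Fin n → ℝ))
            + (2 * π) • (Pi.single k 1 : Fin n → ℝ) := by
        push_cast
        module
      rw [this, hper k, ihm]
    | pred m ihm =>
      intro t
      have : t + (2 * π * (-(m : ℤ) - 1 : ℤ)) • (Pi.single k 1 : Fin n → ℝ)
          + (2 * π) • (Pi.single k 1 : Fin n → ℝ)
          = t + (2 * π * (-(m : ℤ) : ℤ)) • (Pi.single k 1 : Fin n → ℝ) := by
        push_cast
        module
      have h2 := hper k (t + (2 * π * (-(m : ℤ) - 1 : ℤ)) • (Pi.single k 1 : Fin n → ℝ))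
      rw [this] at h2
      rw [← h2]
      exact ihm t
  -- multi-coordinate integer shifts
  have hperm : ∀ (m : Fin n → ℤ) (t : Fin n → ℝ),
      g (t + ∑ i : Fin n, (2 * π * m i) • (Pi.single i 1 : Fin n → ℝ)) = g t := by
    intro m
    have key : ∀ s : Finset (Fin n), ∀ t : Fin n → ℝ,
        g (t + ∑ i ∈ s, (2 * π * m i) • (Pi.single i 1 : Fin n → ℝ)) = g t := by
      intro s
      induction s using Finset.induction_on with
      | empty => intro t; simp
      | @insert i s hi ihs =>
        intro t
        rw [Finset.sum_insert hi]
        have : t + ((2 * π * m i) • (Pi.single i 1 : Fin n → ℝ)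
            + ∑ x ∈ s, (2 * π * m x) • (Pi.single x 1 : Fin n → ℝ))
            = (t + (2 * π * m i) • (Pi.single i 1 : Fin n → ℝ))
              + ∑ x ∈ s, (2 * π * m x) • (Pi.single x 1 : Fin n → ℝ) := by module
        rw [this, ihs, hper1 i (m i) t]
    exact key Finset.univ
  -- bound on the fundamental box
  have hbox : IsCompact (Set.Icc (0 : Fin n → ℝ) (fun _ => 2 * π)) := isCompact_Icc
  obtain ⟨M, hM⟩ := hbox.exists_bound_of_continuousOn hg.continuousOn
  refine ⟨M, fun t => ?_⟩
  set m : Fin n → ℤ := fun i => -⌊t i / (2 * π)⌋ with hm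
  have h2pi : (0 : ℝ) < 2 * π := by positivity
  have hcoord : ∀ i : Fin n, (t + ∑ i : Fin n, (2 * π * m i) • (Pi.single i 1 : Fin n → ℝ)) i
      = 2 * π * Int.fract (t i / (2 * π)) := by
    intro i
    have h1 : (t + ∑ i : Fin n, (2 * π * m i) • (Pi.single i 1 : Fin n → ℝ)) i
        = t i + 2 * π * m i := by
      simp only [Pi.add_apply, Finset.sum_apply, Pi.smul_apply, Pi.single_apply,
        smul_eq_mul]
      rw [Finset.sum_eq_single i (fun b _ hb => by simp [Ne.symm hb]) (by simp)]
      simp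
    rw [h1, hm]
    have h2 : Int.fract (t i / (2 * π)) = t i / (2 * π) - ⌊t i / (2 * π)⌋ :=
      (Int.self_sub_floor _).symm
    rw [h2]
    push_cast
    field_simp
    ring
  have hmem : t + ∑ i : Fin n, (2 * π * m i) • (Pi.single i 1 : Fin n → ℝ)
      ∈ Set.Icc (0 : Fin n → ℝ) (fun _ => 2 * π) := by
    constructor
    · intro i
      rw [show ((0 : Fin n → ℝ) i) = 0 from rfl, hcoord i]
      exact mul_nonneg h2pi.le (Int.fract_nonneg _)
    · intro i
      rw [show ((fun _ : Fin n => 2 * π) i) = 2 * π from rfl, hcoord i]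
      exact mul_le_of_le_one_right h2pi.le (Int.fract_lt_one _).le
  have := hM _ hmem
  rw [← hperm m t]
  simpa using this

lemma prodLemma (N : ℕ) :
    ∀ γ : Fin n → ℕ, (∑ i, γ i) ≤ N →
    ∀ g : (Fin n → ℝ) → ℂ, ContDiff ℝ (⊤ : ℕ∞) g → Per g →
    ∀ v : ℤ → (Fin n → ℝ) → ℂ, (∀ ξ, ContDiff ℝ (⊤ : ℕ∞) (v ξ)) →
    (∀ δ : Fin n → ℕ, (∀ i, δ i ≤ γ i) → ∀ k : ℕ, ∃ C > (0 : ℝ), ∀ (t : Fin n → ℝ) (ξ : ℤ),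
      ‖mderiv n δ (v ξ) t‖ ≤ C * ((1 + |(ξ : ℝ)|) ^ k)⁻¹) →
    ∀ k : ℕ, ∃ C > (0 : ℝ), ∀ (t : Fin n → ℝ) (ξ : ℤ),
      ‖mderiv n γ (fun t => g t * v ξ t) t‖ ≤ C * ((1 + |(ξ : ℝ)|) ^ k)⁻¹ := by
  induction N using Nat.strong_induction_on with
  | _ N ih =>
  intro γ hγ g hg hper v hv Hv k
  by_cases hz : ∀ i, γ i = 0
  · obtain ⟨M, hM⟩ := bounded_of_per hg.continuous hper
    obtain ⟨C, hC, hCb⟩ := Hv γ (fun i => le_refl _) k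
    refine ⟨(max M 1) * C, by positivity, fun t ξ => ?_⟩
    have h1 : mderiv n γ (fun t => g t * v ξ t) = fun t => g t * v ξ t := mderiv_zero hz _
    have h2 : mderiv n γ (v ξ) = v ξ := mderiv_zero hz _
    rw [h1]
    have hb := hCb t ξ
    rw [h2] at hb
    calc ‖g t * v ξ t‖ = ‖g t‖ * ‖v ξ t‖ :=
          norm_mul _ _
      _ ≤ (max M 1) * (C * ((1 + |(ξ : ℝ)|) ^ k)⁻¹) := by
          apply mul_le_mul (le_max_of_le_left (hM t)) hb (norm_nonneg _)
          positivity
      _ = (max M 1) * C * ((1 + |(ξ : ℝ)|) ^ k)⁻¹ := by ring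
  · push_neg at hz
    obtain ⟨i₀, hi₀⟩ := hz
    have hS : (Finset.univ.filter (fun i => γ i ≠ 0)).Nonempty :=
      ⟨i₀, Finset.mem_filter.mpr ⟨Finset.mem_univ _, hi₀⟩⟩
    set j := (Finset.univ.filter (fun i => γ i ≠ 0)).max' hS with hj
    have hjne : γ j ≠ 0 :=
      (Finset.mem_filter.mp ((Finset.univ.filter (fun i => γ i ≠ 0)).max'_mem hS)).2
    have htop : ∀ i, j < i → γ i = 0 := by
      intro i hji
      by_contra hne
      exact absurd (Finset.le_max' _ i (Finset.mem_filter.mpr ⟨Finset.mem_univ _, hne⟩))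
        (not_le.mpr hji)
    set γ' := Function.update γ j (γ j - 1) with hγ'
    have hsum' : (∑ i, γ' i) + 1 = ∑ i, γ i := by
      rw [hγ', Finset.sum_update_of_mem (Finset.mem_univ j)]
      rw [show ∑ i, γ i = γ j + ∑ i ∈ Finset.univ \ {j}, γ i by
        rw [Finset.sum_eq_add_sum_sdiff_singleton_of_mem (Finset.mem_univ j)]]
      omega
    have hN : 1 ≤ N := le_trans (by omega : 1 ≤ ∑ i, γ i) hγ
    have hγ'le : (∑ i, γ' i) ≤ N - 1 := by omega
    have hlt : N - 1 < N := by omega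
    -- the two summands
    have hpdg := pd_contDiff hg j
    have hpdv : ∀ ξ, ContDiff ℝ (⊤ : ℕ∞) (pd n j (v ξ)) := fun ξ => pd_contDiff (hv ξ) j
    obtain ⟨C₁, hC₁, hb₁⟩ := ih (N - 1) hlt γ' hγ'le (pd n j g) hpdg (pd_per hg hper j) v hv
      (fun δ hδ => Hv δ (fun i => le_trans (hδ i) (by
        by_cases hij : i = j
        · subst hij; rw [hγ', Function.update_self]; omega
        · rw [hγ', Function.update_of_ne hij])))
      k
    obtain ⟨C₂, hC₂, hb₂⟩ := ih (N - 1) hlt γ' hγ'le g hg hper (fun ξ => pd n j (v ξ)) hpdv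
      (fun δ hδ k' => by
        set δ' := Function.update δ j (δ j + 1) with hδ'
        have hδ'j : δ' j ≠ 0 := by rw [hδ', Function.update_self]; omega
        have hδ'top : ∀ i, j < i → δ' i = 0 := by
          intro i hji
          rw [hδ', Function.update_of_ne (ne_of_gt hji)]
          have h1 := hδ i
          rw [hγ', Function.update_of_ne (ne_of_gt hji)] at h1
          have h2 := htop i hji
          omega
        have hupd : Function.update δ' j (δ' j - 1) = δ := by
          rw [hδ', Function.update_self, Function.update_idem]
          simpa using Function.update_eq_self j δ
        have hδ'le : ∀ i, δ' i ≤ γ i := by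
          intro i
          by_cases hij : i = j
          · rw [hδ', hij, Function.update_self]
            have h1 := hδ j
            rw [hγ', Function.update_self] at h1
            omega
          · rw [hδ', Function.update_of_ne hij]
            have h1 := hδ i
            rw [hγ', Function.update_of_ne hij] at h1
            exact h1
        obtain ⟨C, hC, hCb⟩ := Hv δ' hδ'le k'
        refine ⟨C, hC, fun t ξ => ?_⟩
        have := hCb t ξ
        rw [mderiv_peel δ' j hδ'j hδ'top (v ξ), hupd] at this
        exact this)
      k
    refine ⟨C₁ + C₂, by positivity, fun t ξ => ?_⟩
    have heq : mderiv n γ (fun t => g t * v ξ t)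
        = fun t => mderiv n γ' (fun t => pd n j g t * v ξ t) t
          + mderiv n γ' (fun t => g t * pd n j (v ξ) t) t := by
      rw [mderiv_peel γ j hjne htop, pd_mul hg (hv ξ) j, ← hγ']
      exact mderiv_add γ' (hpdg.mul (hv ξ)) (hg.mul (hpdv ξ))
    rw [heq]
    calc ‖_‖ ≤ ‖mderiv n γ' (fun t => pd n j g t * v ξ t) t‖
          + ‖mderiv n γ' (fun t => g t * pd n j (v ξ) t) t‖ :=
          norm_add_le _ _
      _ ≤ C₁ * ((1 + |(ξ : ℝ)|) ^ k)⁻¹ + C₂ * ((1 + |(ξ : ℝ)|) ^ k)⁻¹ :=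
          add_le_add (hb₁ t ξ) (hb₂ t ξ)
      _ = (C₁ + C₂) * ((1 + |(ξ : ℝ)|) ^ k)⁻¹ := by ring

theorem stmt_10 (n : ℕ) (hn : 1 ≤ n) (a : Fin n → (Fin n → ℝ) → ℝ)
    (ha : ∀ j, ContDiff ℝ (⊤ : ℕ∞) (a j))
    (haper : ∀ j k (t : Fin n → ℝ), a j (t + (2 * π) • (Pi.single k 1 : Fin n → ℝ)) = a j t)
    (u : ℤ → (Fin n → ℝ) → ℂ) (hu : ∀ ξ, ContDiff ℝ (⊤ : ℕ∞) (u ξ))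
    (f : Fin n → ℤ → (Fin n → ℝ) → ℂ)
    (hf : ∀ (j : Fin n) (ξ : ℤ) (t : Fin n → ℝ),
      f j ξ t = pd n j (u ξ) t + Complex.I * (a j t : ℂ) * (ξ : ℂ) * u ξ t)
    (h1 : ∀ k : ℕ, ∃ C > (0 : ℝ), ∀ (t : Fin n → ℝ) (ξ : ℤ),
      ‖u ξ t‖ ≤ C * ((1 + |(ξ : ℝ)|) ^ k)⁻¹)
    (h2 : ∀ (j : Fin n) (α : Fin n → ℕ) (k : ℕ), ∃ C > (0 : ℝ), ∀ (t : Fin n → ℝ) (ξ : ℤ),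
      ‖mderiv n α (f j ξ) t‖ ≤ C * ((1 + |(ξ : ℝ)|) ^ k)⁻¹) :
    ∀ (α : Fin n → ℕ) (k : ℕ), ∃ C > (0 : ℝ), ∀ (t : Fin n → ℝ) (ξ : ℤ),
      ‖mderiv n α (u ξ) t‖ ≤ C * ((1 + |(ξ : ℝ)|) ^ k)⁻¹ := by
  have key : ∀ N : ℕ, ∀ α : Fin n → ℕ, (∑ i, α i) ≤ N → ∀ k : ℕ, ∃ C > (0 : ℝ),
      ∀ (t : Fin n → ℝ) (ξ : ℤ),
      ‖mderiv n α (u ξ) t‖ ≤ C * ((1 + |(ξ : ℝ)|) ^ k)⁻¹ := by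
    intro N
    induction N using Nat.strong_induction_on with
    | _ N ih =>
    intro α hα k
    by_cases hz : ∀ i, α i = 0
    · obtain ⟨C, hC, hCb⟩ := h1 k
      exact ⟨C, hC, fun t ξ => by rw [mderiv_zero hz]; exact hCb t ξ⟩
    · push_neg at hz
      obtain ⟨i₀, hi₀⟩ := hz
      have hS : (Finset.univ.filter (fun i => α i ≠ 0)).Nonempty :=
        ⟨i₀, Finset.mem_filter.mpr ⟨Finset.mem_univ _, hi₀⟩⟩
      set j := (Finset.univ.filter (fun i => α i ≠ 0)).max' hS with hj
      have hjne : α j ≠ 0 :=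
        (Finset.mem_filter.mp ((Finset.univ.filter (fun i => α i ≠ 0)).max'_mem hS)).2
      have htop : ∀ i, j < i → α i = 0 := by
        intro i hji
        by_contra hne
        exact absurd (Finset.le_max' _ i (Finset.mem_filter.mpr ⟨Finset.mem_univ _, hne⟩))
          (not_le.mpr hji)
      set α' := Function.update α j (α j - 1) with hα'
      have hsum' : (∑ i, α' i) + 1 = ∑ i, α i := by
        rw [hα', Finset.sum_update_of_mem (Finset.mem_univ j)]
        rw [show ∑ i, α i = α j + ∑ i ∈ Finset.univ \ {j}, α i by
          rw [Finset.sum_eq_add_sum_sdiff_singleton_of_mem (Finset.mem_univ j)]]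
        omega
      have h1sum : 1 ≤ ∑ i, α i := by
        have := Finset.single_le_sum (f := α) (fun i _ => Nat.zero_le _) (Finset.mem_univ j)
        omega
      have hN : 1 ≤ N := le_trans h1sum hα
      have hα'le : (∑ i, α' i) ≤ N - 1 := by omega
      have hlt : N - 1 < N := by omega
      -- the coefficient function
      set A : (Fin n → ℝ) → ℂ := fun t => ((a j t : ℝ) : ℂ) with hA
      have hAc : ContDiff ℝ (⊤ : ℕ∞) A := Complex.ofRealCLM.contDiff.comp (ha j)
      have hAper : Per A := fun k' t => congrArg Complex.ofReal (haper j k' t)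
      -- smoothness of f j ξ
      have hfeq : ∀ ξ, f j ξ = fun t => pd n j (u ξ) t + Complex.I * (a j t : ℂ) * (ξ : ℂ) * u ξ t :=
        fun ξ => funext (hf j ξ)
      have hfc : ∀ ξ, ContDiff ℝ (⊤ : ℕ∞) (f j ξ) := by
        intro ξ
        rw [hfeq ξ]
        exact (pd_contDiff (hu ξ) j).add (((contDiff_const.mul hAc).mul contDiff_const).mul (hu ξ))
      -- rewrite the derivative
      have hpdu : ∀ ξ, pd n j (u ξ)
          = fun t => f j ξ t + (-(Complex.I * (ξ : ℂ))) * (A t * u ξ t) := by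
        intro ξ
        funext t
        rw [hf j ξ t, hA]
        ring
      obtain ⟨C₁, hC₁, hb₁⟩ := h2 j α' k
      obtain ⟨C₂, hC₂, hb₂⟩ := prodLemma (N - 1) α' hα'le A hAc hAper u hu
        (fun δ hδ k'' => by
          refine ih (N - 1) hlt δ ?_ k''
          exact le_trans (Finset.sum_le_sum (fun i _ => hδ i)) hα'le)
        (k + 1)
      refine ⟨C₁ + C₂, by positivity, fun t ξ => ?_⟩
      have heq : mderiv n α (u ξ)
          = fun t => mderiv n α' (f j ξ) t
            + (-(Complex.I * (ξ : ℂ))) * mderiv n α' (fun t => A t * u ξ t) t := by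
        rw [mderiv_peel α j hjne htop, ← hα', hpdu ξ,
          mderiv_add α' (hfc ξ) (contDiff_const.mul (hAc.mul (hu ξ)))]
        funext s
        rw [mderiv_const_mul α' (hAc.mul (hu ξ))]
      rw [heq]
      have hxpos : (0 : ℝ) < 1 + |(ξ : ℝ)| := by positivity
      have hstep : |(ξ : ℝ)| * ((1 + |(ξ : ℝ)|) ^ (k + 1))⁻¹ ≤ ((1 + |(ξ : ℝ)|) ^ k)⁻¹ := by
        rw [pow_succ, mul_inv]
        calc |(ξ : ℝ)| * (((1 + |(ξ : ℝ)|) ^ k)⁻¹ * (1 + |(ξ : ℝ)|)⁻¹)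
            = ((1 + |(ξ : ℝ)|) ^ k)⁻¹ * (|(ξ : ℝ)| * (1 + |(ξ : ℝ)|)⁻¹) := by ring
          _ ≤ ((1 + |(ξ : ℝ)|) ^ k)⁻¹ * 1 := by
              apply mul_le_mul_of_nonneg_left _ (by positivity)
              rw [← div_eq_mul_inv, div_le_one hxpos]
              linarith
          _ = ((1 + |(ξ : ℝ)|) ^ k)⁻¹ := mul_one _
      calc ‖_‖ ≤ ‖mderiv n α' (f j ξ) t‖
            + ‖(-(Complex.I * (ξ : ℂ))) * mderiv n α' (fun t => A t * u ξ t) t‖ :=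
            norm_add_le _ _
        _ ≤ C₁ * ((1 + |(ξ : ℝ)|) ^ k)⁻¹
            + |(ξ : ℝ)| * (C₂ * ((1 + |(ξ : ℝ)|) ^ (k + 1))⁻¹) := by
            apply add_le_add (hb₁ t ξ)
            rw [norm_mul]
            have habs : ‖-(Complex.I * (ξ : ℂ))‖ = |(ξ : ℝ)| := by
              rw [norm_neg, norm_mul, Complex.norm_I, one_mul, Complex.norm_intCast]
            rw [habs]
            exact mul_le_mul_of_nonneg_left (hb₂ t ξ) (abs_nonneg _)
        _ ≤ C₁ * ((1 + |(ξ : ℝ)|) ^ k)⁻¹ + C₂ * ((1 + |(ξ : ℝ)|) ^ k)⁻¹ := by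
            apply add_le_add_right
            calc |(ξ : ℝ)| * (C₂ * ((1 + |(ξ : ℝ)|) ^ (k + 1))⁻¹)
                = C₂ * (|(ξ : ℝ)| * ((1 + |(ξ : ℝ)|) ^ (k + 1))⁻¹) := by ring
              _ ≤ C₂ * ((1 + |(ξ : ℝ)|) ^ k)⁻¹ := mul_le_mul_of_nonneg_left hstep hC₂.le
        _ = (C₁ + C₂) * ((1 + |(ξ : ℝ)|) ^ k)⁻¹ := by ring
  intro α k
  exact key (∑ i, α i) α le_rfl k
end

section
/- Let n ≥ 1, p ∈ ℕ, and u : ℤ^n × ℤ → ℂ. Assume: (i) Σ_{(τ,ξ)∈ℤ^n×ℤ} |u(τ,ξ)|² (1+|(τ,ξ)|)^(−2p) < ∞; (ii) there exists c > 0 such that for every k ∈ ℕ there is C_k > 0 with |u(τ,ξ)| ≤ C_k (1+|(τ,ξ)|)^(−k) for all τ ∈ ℤ^n and ξ ∈ ℤ with |ξ| ≤ c|τ|. Then there exists D > 0 such that Σ_{τ∈ℤ^n} |u(τ,ξ)| ≤ D (1+|ξ|)^(2(n+p)) for every ξ ∈ ℤ. -/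
/-- Euclidean norm of `(τ, ξ) ∈ ℤⁿ × ℤ`, viewed inside `ℝ^(n+1)`. -/
noncomputable def pairNorm (n : ℕ) (q : (Fin n → ℤ) × ℤ) : ℝ :=
  Real.sqrt ((∑ j, ((q.1 j : ℝ)) ^ 2) + ((q.2 : ℝ)) ^ 2)

/-- Euclidean norm of `τ ∈ ℤⁿ`, viewed inside `ℝⁿ`. -/
noncomputable def vecNorm (n : ℕ) (τ : Fin n → ℤ) : ℝ :=
  Real.sqrt (∑ j, ((τ j : ℝ)) ^ 2)

lemma vecNorm_nonneg (n : ℕ) (τ : Fin n → ℤ) : 0 ≤ vecNorm n τ := Real.sqrt_nonneg _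

lemma pairNorm_nonneg (n : ℕ) (q : (Fin n → ℤ) × ℤ) : 0 ≤ pairNorm n q := Real.sqrt_nonneg _

lemma sqrt_add_le' (a b : ℝ) (ha : 0 ≤ a) (hb : 0 ≤ b) :
    Real.sqrt (a + b) ≤ Real.sqrt a + Real.sqrt b := by
  have h : a + b ≤ (Real.sqrt a + Real.sqrt b) ^ 2 := by
    rw [add_sq]
    nlinarith [Real.sq_sqrt ha, Real.sq_sqrt hb, Real.sqrt_nonneg a, Real.sqrt_nonneg b]
  calc Real.sqrt (a + b) ≤ Real.sqrt ((Real.sqrt a + Real.sqrt b) ^ 2) := Real.sqrt_le_sqrt h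
    _ = _ := Real.sqrt_sq (by positivity)

lemma abs_le_vecNorm (n : ℕ) (τ : Fin n → ℤ) (j : Fin n) :
    |((τ j : ℝ))| ≤ vecNorm n τ := by
  rw [← Real.sqrt_sq_eq_abs]
  exact Real.sqrt_le_sqrt (Finset.single_le_sum (f := fun i => ((τ i : ℝ))^2)
    (fun i _ => sq_nonneg _) (Finset.mem_univ j))

lemma abs_le_pairNorm (n : ℕ) (τ : Fin n → ℤ) (ξ : ℤ) (j : Fin n) :
    |((τ j : ℝ))| ≤ pairNorm n (τ, ξ) := by
  rw [← Real.sqrt_sq_eq_abs]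
  apply Real.sqrt_le_sqrt
  have h1 : ((τ j : ℝ))^2 ≤ ∑ i, ((τ i : ℝ))^2 := by
    simpa using Finset.single_le_sum (f := fun i => ((τ i : ℝ))^2) (fun i _ => sq_nonneg _)
      (Finset.mem_univ j)
  have h2 : (0:ℝ) ≤ ((ξ:ℝ))^2 := sq_nonneg _
  linarith

lemma pairNorm_le (n : ℕ) (τ : Fin n → ℤ) (ξ : ℤ) :
    pairNorm n (τ, ξ) ≤ vecNorm n τ + |(ξ:ℝ)| := by
  have := sqrt_add_le' (∑ j, ((τ j : ℝ))^2) ((ξ:ℝ)^2)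
    (Finset.sum_nonneg fun i _ => sq_nonneg _) (sq_nonneg _)
  simpa [pairNorm, vecNorm, Real.sqrt_sq_eq_abs] using this

lemma L0 : Summable (fun m : ℕ => (((1:ℝ) + m) ^ 2)⁻¹) := by
  have h : Summable (fun m : ℕ => 1 / ((m:ℝ)) ^ 2) := Real.summable_one_div_nat_pow.2 one_lt_two
  have h2 := h.comp_injective (add_right_injective 1)
  apply h2.congr
  intro m
  simp [one_div]

lemma L1 : Summable (fun k : ℤ => (((1:ℝ) + |k|) ^ 2)⁻¹) := by
  apply Summable.of_nat_of_neg <;>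
    · apply L0.congr
      intro m
      simp

lemma L2 (n : ℕ) : Summable (fun τ : Fin n → ℤ => ∏ j, (((1:ℝ) + |τ j|) ^ 2)⁻¹) := by
  induction n with
  | zero => exact Summable.of_finite
  | succ m ih =>
    have h := (L1.mul_of_nonneg ih (fun k => by positivity) (fun τ => by positivity))
    have := h.comp_injective (Fin.consEquiv (fun _ : Fin (m+1) => ℤ)).symm.injective
    apply this.congr
    intro τ
    simp [Fin.consEquiv, Fin.prod_univ_succ, Fin.tail, mul_comm]

/-- Far-region comparison: the inverse power of the pair norm dominates the product. -/
lemma far_bound (n : ℕ) (τ : Fin n → ℤ) (ξ : ℤ) :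
    ((1 + pairNorm n (τ, ξ)) ^ (2 * n))⁻¹ ≤ ∏ j, (((1:ℝ) + |τ j|) ^ 2)⁻¹ := by
  have hpn := pairNorm_nonneg n (τ, ξ)
  have hprod : (∏ j, ((1:ℝ) + |τ j|) ^ 2) ≤ (1 + pairNorm n (τ, ξ)) ^ (2 * n) := by
    have : (∏ j : Fin n, ((1:ℝ) + |τ j|) ^ 2) ≤ ∏ _j : Fin n, (1 + pairNorm n (τ, ξ)) ^ 2 := by
      apply Finset.prod_le_prod (fun j _ => by positivity)
      intro j _
      have h := abs_le_pairNorm n τ ξ j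
      have : ((1:ℝ) + |τ j|) ≤ 1 + pairNorm n (τ, ξ) := by push_cast; linarith
      exact pow_le_pow_left₀ (by positivity) this 2
    simpa [Finset.prod_const, ← pow_mul, mul_comm] using this
  rw [Finset.prod_inv_distrib]
  exact inv_anti₀ (by positivity) hprod

set_option maxHeartbeats 1000000 in
theorem stmt_11 (n : ℕ) (hn : 1 ≤ n) (p : ℕ) (u : (Fin n → ℤ) × ℤ → ℂ)
    (h1 : Summable (fun q : (Fin n → ℤ) × ℤ =>
      ‖u q‖ ^ 2 * ((1 + pairNorm n q) ^ (2 * p))⁻¹))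
    (h2 : ∃ c > (0 : ℝ), ∀ k : ℕ, ∃ C > (0 : ℝ), ∀ (τ : Fin n → ℤ) (ξ : ℤ),
      |(ξ : ℝ)| ≤ c * vecNorm n τ →
      ‖u (τ, ξ)‖ ≤ C * ((1 + pairNorm n (τ, ξ)) ^ k)⁻¹) :
    ∃ D > (0 : ℝ), ∀ ξ : ℤ,
      Summable (fun τ : Fin n → ℤ => ‖u (τ, ξ)‖) ∧
      ∑' τ : Fin n → ℤ, ‖u (τ, ξ)‖ ≤ D * (1 + |(ξ : ℝ)|) ^ (2 * (n + p)) := by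
  obtain ⟨c, hc, hC⟩ := h2
  obtain ⟨C, hCpos, hCb⟩ := hC (2 * n)
  set S := ∑' q : (Fin n → ℤ) × ℤ, ‖u q‖ ^ 2 * ((1 + pairNorm n q) ^ (2 * p))⁻¹
    with hSdef
  have hS0 : 0 ≤ S := tsum_nonneg (fun q => by
    have := pairNorm_nonneg n q; positivity)
  -- pointwise bound from h1
  have hpt : ∀ q, ‖u q‖ ≤ Real.sqrt S * (1 + pairNorm n q) ^ p := by
    intro q
    have hpn := pairNorm_nonneg n q
    have h1q : ‖u q‖ ^ 2 * ((1 + pairNorm n q) ^ (2 * p))⁻¹ ≤ S :=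
      Summable.le_tsum h1 q (fun j _ => by have := pairNorm_nonneg n j; positivity)
    have hpow : (0:ℝ) < (1 + pairNorm n q) ^ (2 * p) := by positivity
    have h2q : ‖u q‖ ^ 2 ≤ S * (1 + pairNorm n q) ^ (2 * p) := by
      rw [← div_eq_mul_inv] at h1q
      exact (div_le_iff₀ hpow).1 h1q
    calc ‖u q‖ = Real.sqrt (‖u q‖ ^ 2) :=
          (Real.sqrt_sq (norm_nonneg _)).symm
      _ ≤ Real.sqrt (S * (1 + pairNorm n q) ^ (2 * p)) := Real.sqrt_le_sqrt h2q
      _ = Real.sqrt S * (1 + pairNorm n q) ^ p := by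
          rw [Real.sqrt_mul hS0, show (2 * p) = p * 2 by ring, pow_mul,
            Real.sqrt_sq (by positivity)]
  set T := ∑' τ : Fin n → ℤ, ∏ j, (((1:ℝ) + |τ j|) ^ 2)⁻¹ with hTdef
  have hT0 : 0 ≤ T := tsum_nonneg (fun τ => by positivity)
  set K : ℝ := 1 / c + 1 with hKdef
  have hK0 : 0 < K := by positivity
  set A : ℝ := (2 / c + 3) ^ n * (Real.sqrt S * (1 + K) ^ p) with hAdef
  have hA0 : 0 ≤ A := by positivity
  refine ⟨C * T + A + 1, by positivity, fun ξ => ?_⟩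
  set f : (Fin n → ℤ) → ℝ := fun τ => ‖u (τ, ξ)‖ with hfdef
  have hf0 : ∀ τ, 0 ≤ f τ := fun τ => norm_nonneg _
  set g : (Fin n → ℤ) → ℝ := fun τ => C * ∏ j, (((1:ℝ) + |τ j|) ^ 2)⁻¹ with hgdef
  have hg : Summable g := (L2 n).mul_left C
  have hg0 : ∀ τ, 0 ≤ g τ := fun τ => by positivity
  set s : Set (Fin n → ℤ) := {τ | |(ξ : ℝ)| ≤ c * vecNorm n τ} with hsdef
  -- on s, f ≤ g
  have hfar : ∀ τ ∈ s, f τ ≤ g τ := by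
    intro τ hτ
    calc f τ ≤ C * ((1 + pairNorm n (τ, ξ)) ^ (2 * n))⁻¹ := hCb τ ξ hτ
      _ ≤ g τ := by
          exact mul_le_mul_of_nonneg_left (far_bound n τ ξ) (le_of_lt hCpos)
  -- the complement is finite
  set M : ℕ := ⌈|(ξ : ℝ)| / c⌉₊ with hMdef
  set box : Finset (Fin n → ℤ) :=
    Fintype.piFinset (fun _ : Fin n => Finset.Icc (-(M:ℤ)) (M:ℤ)) with hboxdef
  have hsub : sᶜ ⊆ ↑box := by
    intro τ hτ
    simp only [Set.mem_compl_iff, hsdef, Set.mem_setOf_eq, not_le] at hτ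
    have hv : vecNorm n τ ≤ |(ξ:ℝ)| / c := by
      rw [le_div_iff₀ hc]
      nlinarith [vecNorm_nonneg n τ]
    simp only [hboxdef, Finset.coe_sort_coe, Finset.mem_coe, Fintype.mem_piFinset,
      Finset.mem_Icc]
    intro j
    have h1 : |((τ j : ℝ))| ≤ (M:ℝ) := le_trans (le_trans (abs_le_vecNorm n τ j) hv)
      (Nat.le_ceil _)
    have h2 : |τ j| ≤ (M:ℤ) := by exact_mod_cast (by simpa using h1 : ((|τ j| : ℤ):ℝ) ≤ (M:ℝ))
    constructor <;> [exact neg_le_of_abs_le h2; exact le_of_abs_le h2]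
  have hfin : (sᶜ).Finite := Set.Finite.subset box.finite_toSet hsub
  haveI := hfin.to_subtype
  -- summability
  have h_far : Summable (fun x : s => f x) :=
    Summable.of_nonneg_of_le (fun x => hf0 _) (fun x => hfar x x.2) (hg.subtype _)
  have h_near : Summable (fun x : ↥sᶜ => f x) := Summable.of_finite
  have hsum : Summable f := summable_subtype_and_compl.1 ⟨h_far, h_near⟩
  refine ⟨hsum, ?_⟩
  -- bound on far part
  have hfarsum : ∑' x : s, f x ≤ C * T := by
    calc ∑' x : s, f x ≤ ∑' x : s, g x := Summable.tsum_le_tsum (fun x => hfar x x.2) h_far (hg.subtype _)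
      _ ≤ ∑' τ, g τ := Summable.tsum_subtype_le g s hg0 hg
      _ = C * T := tsum_mul_left
  -- bound on near part
  have hξ0 : (0:ℝ) ≤ |(ξ:ℝ)| := abs_nonneg _
  set bnd : ℝ := Real.sqrt S * ((1 + K) * (1 + |(ξ:ℝ)|)) ^ p with hbnddef
  have hbnd0 : 0 ≤ bnd := by positivity
  have hnearpt : ∀ τ ∈ sᶜ, f τ ≤ bnd := by
    intro τ hτ
    simp only [Set.mem_compl_iff, hsdef, Set.mem_setOf_eq, not_le] at hτ
    have hv : vecNorm n τ ≤ |(ξ:ℝ)| / c := by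
      rw [le_div_iff₀ hc]; nlinarith [vecNorm_nonneg n τ]
    have hp1 : 1 + pairNorm n (τ, ξ) ≤ (1 + K) * (1 + |(ξ:ℝ)|) := by
      have h3 := pairNorm_le n τ ξ
      have hv' : vecNorm n τ ≤ 1 / c * |(ξ:ℝ)| := by
        rw [one_div]; rwa [div_eq_mul_inv, mul_comm] at hv
      have h4 : pairNorm n (τ, ξ) ≤ K * |(ξ:ℝ)| := by
        rw [hKdef, add_mul, one_mul]; linarith
      nlinarith [hK0, hξ0, h4]
    calc f τ ≤ Real.sqrt S * (1 + pairNorm n (τ, ξ)) ^ p := hpt (τ, ξ)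
      _ ≤ bnd := by
          apply mul_le_mul_of_nonneg_left _ (Real.sqrt_nonneg S)
          exact pow_le_pow_left₀ (by have := pairNorm_nonneg n (τ, ξ); positivity) hp1 p
  have hnearsum : ∑' x : ↥sᶜ, f x ≤ (box.card : ℝ) * bnd := by
    rw [tsum_subtype]
    rw [tsum_eq_sum (s := box) (fun τ hτ => Set.indicator_of_notMem
      (fun hmem => hτ (hsub hmem)) f)]
    calc ∑ τ ∈ box, (sᶜ).indicator f τ ≤ box.card • bnd := by
          apply Finset.sum_le_card_nsmul
          intro τ _
          by_cases hτ : τ ∈ sᶜ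
          · rw [Set.indicator_of_mem hτ]; exact hnearpt τ hτ
          · rw [Set.indicator_of_notMem hτ]; exact hbnd0
      _ = (box.card : ℝ) * bnd := nsmul_eq_mul _ _
  -- card of box
  have hcard : (box.card : ℝ) ≤ ((2 / c + 3) * (1 + |(ξ:ℝ)|)) ^ n := by
    have h1 : box.card = (2 * M + 1) ^ n := by
      simp [hboxdef, Fintype.card_piFinset, Int.card_Icc]
      congr 1
      omega
    rw [h1]
    push_cast
    apply pow_le_pow_left₀ (by positivity)
    have hM : (M:ℝ) ≤ |(ξ:ℝ)| / c + 1 := le_of_lt (Nat.ceil_lt_add_one (by positivity))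
    have hM' : (M:ℝ) ≤ 1 / c * |(ξ:ℝ)| + 1 := by
      rw [one_div]; rwa [div_eq_mul_inv, mul_comm] at hM
    have he : (2 / c + 3) * (1 + |(ξ:ℝ)|) = 2 / c + 3 + 2 * (1 / c * |(ξ:ℝ)|) + 3 * |(ξ:ℝ)| := by
      ring
    have h2c : (0:ℝ) < 2 / c := by positivity
    rw [he]
    linarith
  -- put together
  have hsplit : ∑' τ, f τ = (∑' x : s, f x) + ∑' x : ↥sᶜ, f x :=
    (Summable.tsum_add_tsum_compl (f := f) (s := s) h_far h_near).symm
  rw [hsplit]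
  have hX1 : (1:ℝ) ≤ 1 + |(ξ:ℝ)| := by linarith
  have hXpow : (1:ℝ) ≤ (1 + |(ξ:ℝ)|) ^ (2 * (n + p)) := one_le_pow₀ hX1
  have hmid : (∑' x : s, f x) + ∑' x : ↥sᶜ, f x ≤ C * T + A * (1 + |(ξ:ℝ)|) ^ (n + p) := by
    have : (box.card : ℝ) * bnd ≤ A * (1 + |(ξ:ℝ)|) ^ (n + p) := by
      calc (box.card : ℝ) * bnd ≤ ((2 / c + 3) * (1 + |(ξ:ℝ)|)) ^ n * bnd :=
            mul_le_mul_of_nonneg_right hcard hbnd0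
        _ = A * (1 + |(ξ:ℝ)|) ^ (n + p) := by
            rw [hbnddef, hAdef, mul_pow, mul_pow, pow_add]; ring
    linarith [hfarsum, hnearsum]
  have hfin2 : C * T + A * (1 + |(ξ:ℝ)|) ^ (n + p)
      ≤ (C * T + A + 1) * (1 + |(ξ:ℝ)|) ^ (2 * (n + p)) := by
    have hmono : (1 + |(ξ:ℝ)|) ^ (n + p) ≤ (1 + |(ξ:ℝ)|) ^ (2 * (n + p)) :=
      pow_le_pow_right₀ hX1 (by omega)
    have hCT : 0 ≤ C * T := mul_nonneg (le_of_lt hCpos) hT0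
    nlinarith [mul_le_mul_of_nonneg_left hmono hA0]
  linarith
end
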